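/- Fix o ∈ X and let f ∈ L(X). The iterated Poisson equation Δ²u = f has a solution u ∈ L(X) if and only if ∫_X f dπ = 0. In that case the unique solution with u(o) = 0 is u = G_{X∖{o}}( G_{X∖{o}} f − c·𝟙 ), where c = ∑_{x∈X∖{o}} π(x)·(G_{X∖{o}} f)(x), 𝟙 is the constant function 1, and G_{X∖{o}} is regarded as an X×X matrix with zero entries in the row and column of o; the set of all solutions is exactly {u + c' : c' ∈ ℂ}. -/

import Mathlib

open Matrix Finset

/-- The Laplacian `Δu = Pu − u` acting on complex functions. -/
noncomputable def lap {X : Type*} [Fintype X] (P : Matrix X X ℝ) (u : X → ℂ) (x : X) : ℂ :=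
  (∑ y, (P x y : ℂ) * u y) - u x

/-- The `A × A` submatrix of `P`. -/
def subMatrix {X : Type*} (P : Matrix X X ℝ) (A : Finset X) : Matrix A A ℝ :=
  Matrix.of fun x y => P x.1 y.1

/-- The Green kernel `G_A = (I_A − P_A)⁻¹`. -/
noncomputable def green {X : Type*} [DecidableEq X] (P : Matrix X X ℝ) (A : Finset X) :
    Matrix A A ℝ :=
  (1 - subMatrix P A)⁻¹

/-- `G_A` regarded as an `X × X` matrix with zero entries outside `A × A`. -/
noncomputable def greenExt {X : Type*} [DecidableEq X] (P : Matrix X X ℝ) (A : Finset X) :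
    Matrix X X ℝ :=
  Matrix.of fun x y =>
    if hx : x ∈ A then (if hy : y ∈ A then green P A ⟨x, hx⟩ ⟨y, hy⟩ else 0) else 0

/-- A real matrix acting on complex functions. -/
noncomputable def mulVecC {m n : Type*} [Fintype n] (M : Matrix m n ℝ) (f : n → ℂ) (x : m) : ℂ :=
  ∑ y, (M x y : ℂ) * f y


set_option linter.unusedSectionVars false
set_option linter.unusedVariables false

lemma pow_nonneg_entry {X : Type*} [Fintype X] [DecidableEq X] (P : Matrix X X ℝ)
    (hnonneg : ∀ x y, 0 ≤ P x y) : ∀ (n : ℕ) (x y : X), 0 ≤ (P ^ n) x y := by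
  intro n
  induction n with
  | zero => intro x y; simp [Matrix.one_apply]; split <;> norm_num
  | succ n ih =>
      intro x y
      rw [pow_succ]
      exact Finset.sum_nonneg fun z _ => mul_nonneg (ih x z) (hnonneg z y)

noncomputable def Complex.abs : AbsoluteValue ℂ ℝ where
  toFun z := ‖z‖
  map_mul' := norm_mul
  nonneg' := norm_nonneg
  eq_zero' _ := norm_eq_zero
  add_le' := norm_add_le

lemma Complex.abs_ofReal (r : ℝ) : Complex.abs (r : ℂ) = |r| := by
  show ‖(r : ℂ)‖ = |r|
  simp

lemma kernelK {X : Type*} [Fintype X] [DecidableEq X]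
    (P : Matrix X X ℝ) (hnonneg : ∀ x y, 0 ≤ P x y) (hrow : ∀ x, ∑ y, P x y = 1)
    (hirr : ∀ x y, ∃ n, 1 ≤ n ∧ 0 < (P ^ n) x y)
    (o : X) (v : X → ℂ) (hvo : v o = 0)
    (hv : ∀ x, x ≠ o → v x = ∑ y, (P x y : ℂ) * v y) :
    ∀ x, v x = 0 := by
  have hne : (Finset.univ : Finset X).Nonempty := ⟨o, mem_univ o⟩
  obtain ⟨x₀, -, hx₀'⟩ := Finset.exists_max_image Finset.univ (fun x => Complex.abs (v x)) hne
  obtain ⟨M, hMdef⟩ : ∃ M : ℝ, M = Complex.abs (v x₀) := ⟨_, rfl⟩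
  have hx₀ : ∀ x, Complex.abs (v x) ≤ M := by
    intro x; rw [hMdef]; exact hx₀' x (mem_univ x)
  have prop : ∀ x, Complex.abs (v x) = M → ∀ y, 0 < P x y → Complex.abs (v y) = M := by
    intro x hx y hPxy
    by_cases hxo : x = o
    · have hM0 : M = 0 := by rw [← hx, hxo, hvo]; simp
      have h1 := hx₀ y
      have h2 := Complex.abs.nonneg (v y)
      rw [hM0] at h1 ⊢; linarith
    · have h1 : M ≤ ∑ y, P x y * Complex.abs (v y) := by
        calc M = Complex.abs (v x) := hx.symm
        _ = Complex.abs (∑ y, (P x y : ℂ) * v y) := by rw [hv x hxo]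
        _ ≤ ∑ y, Complex.abs ((P x y : ℂ) * v y) := AbsoluteValue.sum_le _ _ _
        _ = ∑ y, P x y * Complex.abs (v y) := by
            apply Finset.sum_congr rfl; intro z _
            rw [AbsoluteValue.map_mul, Complex.abs_ofReal, abs_of_nonneg (hnonneg x z)]
      have h2 : ∑ y, P x y * (M - Complex.abs (v y)) = 0 := by
        have expand : ∑ y, P x y * (M - Complex.abs (v y))
            = M - ∑ y, P x y * Complex.abs (v y) := by
          rw [Finset.sum_congr rfl (fun z _ => mul_sub (P x z) M (Complex.abs (v z)))]
          rw [Finset.sum_sub_distrib, ← Finset.sum_mul, hrow, one_mul]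
        have h3 : ∑ y, P x y * Complex.abs (v y) ≤ M := by
          calc ∑ y, P x y * Complex.abs (v y) ≤ ∑ y, P x y * M := by
                apply Finset.sum_le_sum; intro z _
                exact mul_le_mul_of_nonneg_left (hx₀ z) (hnonneg x z)
          _ = M := by rw [← Finset.sum_mul, hrow, one_mul]
        rw [expand]; linarith
      have h4 := (Finset.sum_eq_zero_iff_of_nonneg (fun z _ => by
        have := hx₀ z
        exact mul_nonneg (hnonneg x z) (by linarith))).mp h2 y (mem_univ y)
      have h5 : M - Complex.abs (v y) = 0 := by
        rcases mul_eq_zero.mp h4 with h | h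
        · exact absurd h (ne_of_gt hPxy)
        · exact h
      linarith [h5]
  have chain : ∀ n : ℕ, ∀ x, Complex.abs (v x) = M → 0 < (P ^ n) x o → Complex.abs (v o) = M := by
    intro n
    induction n with
    | zero =>
        intro x hx h
        simp [Matrix.one_apply] at h
        by_cases hxo : x = o
        · rw [← hxo]; exact hx
        · simp [hxo] at h
    | succ n ih =>
        intro x hx h
        rw [pow_succ'] at h
        have : ∃ y, 0 < P x y * (P ^ n) y o := by
          by_contra hc
          push_neg at hc
          have hle : ∑ y, P x y * (P ^ n) y o ≤ 0 := Finset.sum_nonpos (fun y _ => hc y)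
          have h' : (P * P ^ n) x o = ∑ y, P x y * (P ^ n) y o := rfl
          rw [h'] at h; linarith
        obtain ⟨y, hy⟩ := this
        have hP : 0 < P x y := by
          rcases lt_or_ge 0 (P x y) with h' | h'
          · exact h'
          · exfalso
            have h0 : P x y = 0 := le_antisymm h' (hnonneg x y)
            rw [h0, zero_mul] at hy; exact lt_irrefl 0 hy
        have hPn : 0 < (P ^ n) y o := by
          rcases lt_or_ge 0 ((P ^ n) y o) with h' | h'
          · exact h'
          · exfalso; nlinarith [pow_nonneg_entry P hnonneg n y o]
        exact ih y (prop x hx y hP) hPn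
  obtain ⟨n, -, hn⟩ := hirr x₀ o
  have hMo : Complex.abs (v o) = M := chain n x₀ hMdef.symm hn
  have hM0 : M = 0 := by rw [← hMo, hvo]; simp
  intro x
  have h1 := hx₀ x
  rw [hM0] at h1
  have h0 := Complex.abs.nonneg (v x)
  have : Complex.abs (v x) = 0 := le_antisymm h1 h0
  exact Complex.abs.eq_zero.mp this

lemma det_ne {X : Type*} [Fintype X] [DecidableEq X]
    (P : Matrix X X ℝ) (hnonneg : ∀ x y, 0 ≤ P x y) (hrow : ∀ x, ∑ y, P x y = 1)
    (hirr : ∀ x y, ∃ n, 1 ≤ n ∧ 0 < (P ^ n) x y) (o : X) :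
    (1 - subMatrix P (Finset.univ.erase o)).det ≠ 0 := by
  set A := Finset.univ.erase o with hA
  intro hdet
  obtain ⟨v, hv0, hveq⟩ := (Matrix.exists_mulVec_eq_zero_iff).mpr hdet
  set V : X → ℂ := fun x => if hx : x ∈ A then (v ⟨x, hx⟩ : ℂ) else 0 with hV
  have hVo : V o = 0 := by
    simp only [hV]
    rw [dif_neg (by simp [hA])]
  have hVeq : ∀ x, x ≠ o → V x = ∑ y, (P x y : ℂ) * V y := by
    intro x hx
    have hxA : x ∈ A := by simp [hA, hx]
    have heq := congrFun hveq ⟨x, hxA⟩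
    rw [Pi.zero_apply] at heq
    have hmv : ((1 - subMatrix P A) *ᵥ v) ⟨x, hxA⟩
        = ∑ y : A, ((if (⟨x, hxA⟩ : A) = y then 1 else 0) - P x y.1) * v y := by
      simp [Matrix.mulVec, dotProduct, Matrix.sub_apply, Matrix.one_apply, subMatrix]
    rw [hmv] at heq
    have hexp : ∑ y : A, ((if (⟨x, hxA⟩ : A) = y then 1 else 0) - P x y.1) * v y
        = v ⟨x, hxA⟩ - ∑ y : A, P x y.1 * v y := by
      rw [Finset.sum_congr rfl (fun y _ => sub_mul _ _ (v y)), Finset.sum_sub_distrib]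
      congr 1
      simp
    rw [hexp] at heq
    have heq' : v ⟨x, hxA⟩ = ∑ y : A, P x y.1 * v y := by linarith
    have hsplit : ∑ y, (P x y : ℂ) * V y = ∑ y ∈ A, (P x y : ℂ) * V y := by
      rw [← Finset.sum_erase_add Finset.univ (fun y => (P x y : ℂ) * V y) (Finset.mem_univ o),
        ← hA, hVo]
      simp
    have hsub : ∑ y ∈ A, (P x y : ℂ) * V y = ∑ y : A, (P x y.1 : ℂ) * V y.1 :=
      (Finset.sum_coe_sort A (fun y => (P x y : ℂ) * V y)).symm
    have hVval : ∀ y : A, V y.1 = (v y : ℂ) := by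
      intro y
      simp only [hV]
      rw [dif_pos y.2]
    rw [hsplit, hsub, Finset.sum_congr rfl (fun y _ => by rw [hVval y])]
    have : V x = (v ⟨x, hxA⟩ : ℂ) := by simp only [hV]; rw [dif_pos hxA]
    rw [this, heq']
    push_cast
    rfl
  have := kernelK P hnonneg hrow hirr o V hVo hVeq
  apply hv0
  funext y
  have := this y.1
  simp only [hV] at this
  rw [dif_pos y.2] at this
  exact_mod_cast this

lemma greenExt_o_row {X : Type*} [Fintype X] [DecidableEq X] (P : Matrix X X ℝ) (o : X)
    (z : X) : greenExt P (Finset.univ.erase o) o z = 0 := by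
  simp [greenExt]

lemma mulVecC_greenExt_o {X : Type*} [Fintype X] [DecidableEq X] (P : Matrix X X ℝ) (o : X)
    (g : X → ℂ) : mulVecC (greenExt P (Finset.univ.erase o)) g o = 0 := by
  simp [mulVecC, greenExt_o_row]

lemma hPQ {X : Type*} [Fintype X] [DecidableEq X]
    (P : Matrix X X ℝ) (hnonneg : ∀ x y, 0 ≤ P x y) (hrow : ∀ x, ∑ y, P x y = 1)
    (hirr : ∀ x y, ∃ n, 1 ≤ n ∧ 0 < (P ^ n) x y) (o : X) (x z : X) (hx : x ≠ o) :
    ∑ y, P x y * greenExt P (Finset.univ.erase o) y z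
      = greenExt P (Finset.univ.erase o) x z - (if x = z then 1 else 0) := by
  set A := Finset.univ.erase o with hA
  have hxA : x ∈ A := by simp [hA, hx]
  have hGinv : (1 - subMatrix P A) * green P A = 1 :=
    Matrix.mul_nonsing_inv _ (det_ne P hnonneg hrow hirr o).isUnit
  have hsplit : ∑ y, P x y * greenExt P A y z = ∑ y ∈ A, P x y * greenExt P A y z := by
    rw [← Finset.sum_erase_add Finset.univ (fun y => P x y * greenExt P A y z)
      (Finset.mem_univ o), ← hA]
    have : greenExt P A o z = 0 := by rw [hA]; exact greenExt_o_row P o z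
    rw [this, mul_zero, add_zero]
  by_cases hzA : z ∈ A
  · have entry := congrFun (congrFun hGinv ⟨x, hxA⟩) ⟨z, hzA⟩
    rw [Matrix.mul_apply, Matrix.one_apply] at entry
    have hexp : ∑ y : A, (1 - subMatrix P A) ⟨x, hxA⟩ y * green P A y ⟨z, hzA⟩
        = green P A ⟨x, hxA⟩ ⟨z, hzA⟩ - ∑ y : A, P x y.1 * green P A y ⟨z, hzA⟩ := by
      have : ∀ y : A, (1 - subMatrix P A) ⟨x, hxA⟩ y * green P A y ⟨z, hzA⟩
          = (if (⟨x, hxA⟩ : A) = y then 1 else 0) * green P A y ⟨z, hzA⟩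
            - P x y.1 * green P A y ⟨z, hzA⟩ := by
        intro y
        rw [Matrix.sub_apply, Matrix.one_apply, sub_mul]
        rfl
      rw [Finset.sum_congr rfl (fun y _ => this y), Finset.sum_sub_distrib]
      congr 1
      simp
    rw [hexp] at entry
    have hsub : ∑ y ∈ A, P x y * greenExt P A y z = ∑ y : A, P x y.1 * green P A y ⟨z, hzA⟩ := by
      rw [← Finset.sum_coe_sort A (fun y => P x y * greenExt P A y z)]
      apply Finset.sum_congr rfl
      intro y _
      congr 1
      simp only [greenExt, Matrix.of_apply]
      rw [dif_pos y.2, dif_pos hzA]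
    have hGxz : greenExt P A x z = green P A ⟨x, hxA⟩ ⟨z, hzA⟩ := by
      simp only [greenExt, Matrix.of_apply]
      rw [dif_pos hxA, dif_pos hzA]
    have hiff : ((⟨x, hxA⟩ : A) = (⟨z, hzA⟩ : A)) ↔ x = z := Subtype.ext_iff
    rw [hsplit, hsub, hGxz]
    by_cases hxz : x = z
    · rw [if_pos hxz] at *
      rw [if_pos (hiff.mpr hxz)] at entry
      linarith
    · rw [if_neg hxz]
      rw [if_neg (fun h => hxz (hiff.mp h))] at entry
      rw [sub_zero]
      linarith
  · have hzero : ∀ y, greenExt P A y z = 0 := by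
      intro y
      simp only [greenExt, Matrix.of_apply]
      by_cases hy : y ∈ A
      · rw [dif_pos hy, dif_neg hzA]
      · rw [dif_neg hy]
    have hxz : x ≠ z := by
      intro h; rw [h] at hxA; exact hzA hxA
    rw [hsplit, Finset.sum_congr rfl (fun y _ => by rw [hzero y, mul_zero]), Finset.sum_const,
      smul_zero, hzero x, if_neg hxz, sub_zero]

section
variable {X : Type*} [Fintype X] [DecidableEq X] (P : Matrix X X ℝ)

lemma rowC (hrow : ∀ x, ∑ y, P x y = 1) (x : X) : ∑ y, (P x y : ℂ) = 1 := by
  rw [← Complex.ofReal_sum, hrow]; norm_num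

lemma lap_const_sub (hrow : ∀ x, ∑ y, P x y = 1) (c : ℂ) (a : X → ℂ) (x : X) :
    lap P (fun y => c - a y) x = - lap P a x := by
  unfold lap
  have h1 : ∑ y, (P x y : ℂ) * (c - a y) = c - ∑ y, (P x y : ℂ) * a y := by
    rw [Finset.sum_congr rfl (fun y _ => mul_sub _ c (a y)), Finset.sum_sub_distrib,
      ← Finset.sum_mul, rowC P hrow, one_mul]
  rw [h1]; ring

lemma lap_add_const (hrow : ∀ x, ∑ y, P x y = 1) (c : ℂ) (a : X → ℂ) (x : X) :
    lap P (fun y => a y + c) x = lap P a x := by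
  unfold lap
  have h1 : ∑ y, (P x y : ℂ) * (a y + c) = (∑ y, (P x y : ℂ) * a y) + c := by
    rw [Finset.sum_congr rfl (fun y _ => mul_add _ (a y) c), Finset.sum_add_distrib,
      ← Finset.sum_mul, rowC P hrow, one_mul]
  rw [h1]; ring

lemma stat_lap (π : X → ℝ) (hπstat : ∀ y, ∑ x, π x * P x y = π y) (w : X → ℂ) :
    ∑ x, (π x : ℂ) * lap P w x = 0 := by
  unfold lap
  have h1 : ∑ x, (π x : ℂ) * ((∑ y, (P x y : ℂ) * w y) - w x)
      = (∑ x, ∑ y, (π x : ℂ) * ((P x y : ℂ) * w y)) - ∑ x, (π x : ℂ) * w x := by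
    rw [Finset.sum_congr rfl (fun x _ => by rw [mul_sub, Finset.mul_sum]),
      Finset.sum_sub_distrib]
  rw [h1, Finset.sum_comm]
  have h2 : ∀ y, ∑ x, (π x : ℂ) * ((P x y : ℂ) * w y) = (π y : ℂ) * w y := by
    intro y
    have : ∑ x, (π x : ℂ) * ((P x y : ℂ) * w y) = ((∑ x, π x * P x y : ℝ) : ℂ) * w y := by
      push_cast
      rw [Finset.sum_mul]
      apply Finset.sum_congr rfl
      intro x _
      ring
    rw [this, hπstat y]
  rw [Finset.sum_congr rfl (fun y _ => h2 y), sub_self]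

lemma lap_greenExt_ne (hnonneg : ∀ x y, 0 ≤ P x y) (hrow : ∀ x, ∑ y, P x y = 1)
    (hirr : ∀ x y, ∃ n, 1 ≤ n ∧ 0 < (P ^ n) x y) (o : X) (g : X → ℂ) (x : X) (hx : x ≠ o) :
    lap P (mulVecC (greenExt P (Finset.univ.erase o)) g) x = -g x := by
  set A := Finset.univ.erase o with hA
  unfold lap mulVecC
  have h1 : ∑ y, (P x y : ℂ) * ∑ z, (greenExt P A y z : ℂ) * g z
      = ∑ z, (∑ y, (P x y : ℂ) * (greenExt P A y z : ℂ)) * g z := by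
    rw [Finset.sum_congr rfl (fun y _ => Finset.mul_sum _ _ _), Finset.sum_comm]
    apply Finset.sum_congr rfl
    intro z _
    rw [Finset.sum_mul]
    apply Finset.sum_congr rfl
    intro y _
    ring
  have h2 : ∀ z, (∑ y, (P x y : ℂ) * (greenExt P A y z : ℂ))
      = (greenExt P A x z : ℂ) - (if x = z then 1 else 0) := by
    intro z
    have hcast : ∑ y, (P x y : ℂ) * (greenExt P A y z : ℂ)
        = ((∑ y, P x y * greenExt P A y z : ℝ) : ℂ) := by push_cast; rfl
    rw [hcast, hA, hPQ P hnonneg hrow hirr o x z hx]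
    push_cast
    split <;> simp
  rw [h1, Finset.sum_congr rfl (fun z _ => by rw [h2 z])]
  have h3 : ∑ z, ((greenExt P A x z : ℂ) - (if x = z then 1 else 0)) * g z
      = (∑ z, (greenExt P A x z : ℂ) * g z) - g x := by
    rw [Finset.sum_congr rfl (fun z _ => sub_mul _ _ (g z)), Finset.sum_sub_distrib]
    congr 1
    simp
  rw [h3]
  ring

lemma lap_greenExt_all (hnonneg : ∀ x y, 0 ≤ P x y) (hrow : ∀ x, ∑ y, P x y = 1)
    (hirr : ∀ x y, ∃ n, 1 ≤ n ∧ 0 < (P ^ n) x y)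
    (π : X → ℝ) (hπstat : ∀ y, ∑ x, π x * P x y = π y) (hπpos : ∀ x, 0 < π x)
    (o : X) (g : X → ℂ) (hg : ∑ x, (π x : ℂ) * g x = 0) (x : X) :
    lap P (mulVecC (greenExt P (Finset.univ.erase o)) g) x = -g x := by
  by_cases hx : x = o
  · rw [hx]
    set h := mulVecC (greenExt P (Finset.univ.erase o)) g with hh
    have hstat := stat_lap P π hπstat h
    rw [← Finset.sum_erase_add Finset.univ _ (Finset.mem_univ o)] at hstat
    have h1 : ∑ y ∈ Finset.univ.erase o, (π y : ℂ) * lap P h y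
        = ∑ y ∈ Finset.univ.erase o, -((π y : ℂ) * g y) := by
      apply Finset.sum_congr rfl
      intro y hy
      rw [hh, lap_greenExt_ne P hnonneg hrow hirr o g y (Finset.ne_of_mem_erase hy)]
      ring
    rw [h1] at hstat
    have h2 : ∑ y ∈ Finset.univ.erase o, -((π y : ℂ) * g y) = (π o : ℂ) * g o := by
      have hh2 := Finset.sum_erase_add Finset.univ (fun y => -((π y : ℂ) * g y)) (Finset.mem_univ o)
      have htot : ∑ y, -((π y : ℂ) * g y) = 0 := by
        rw [Finset.sum_neg_distrib, hg, neg_zero]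
      rw [htot] at hh2
      linear_combination hh2
    rw [h2] at hstat
    have hπx : (π o : ℂ) ≠ 0 := by
      simp only [ne_eq, Complex.ofReal_eq_zero]
      exact ne_of_gt (hπpos o)
    have : (π o : ℂ) * (lap P h o + g o) = 0 := by ring_nf; linear_combination hstat
    rcases mul_eq_zero.mp this with hc | hc
    · exact absurd hc hπx
    · linear_combination hc
  · exact lap_greenExt_ne P hnonneg hrow hirr o g x hx

end

section
variable {X : Type*} [Fintype X] [DecidableEq X] (P : Matrix X X ℝ)

lemma lap_sub (a b : X → ℂ) (x : X) :
    lap P (fun y => a y - b y) x = lap P a x - lap P b x := by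
  unfold lap
  rw [Finset.sum_congr rfl (fun y _ => mul_sub _ (a y) (b y)), Finset.sum_sub_distrib]
  ring

lemma harmonic_const (hnonneg : ∀ x y, 0 ≤ P x y) (hrow : ∀ x, ∑ y, P x y = 1)
    (hirr : ∀ x y, ∃ n, 1 ≤ n ∧ 0 < (P ^ n) x y) (o : X)
    (v : X → ℂ) (hv : ∀ x, lap P v x = 0) (x : X) : v x = v o := by
  have key := kernelK P hnonneg hrow hirr o (fun y => v y - v o) (by simp)
    (fun x _ => by
      have h1 : ∑ y, (P x y : ℂ) * (v y - v o) = (∑ y, (P x y : ℂ) * v y) - v o := by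
        rw [Finset.sum_congr rfl (fun y _ => mul_sub _ (v y) (v o)), Finset.sum_sub_distrib,
          ← Finset.sum_mul, rowC P hrow, one_mul]
      have h2 := hv x
      unfold lap at h2
      rw [h1]
      linear_combination -h2)
  have := key x
  linear_combination this

lemma bisolution (hnonneg : ∀ x y, 0 ≤ P x y) (hrow : ∀ x, ∑ y, P x y = 1)
    (hirr : ∀ x y, ∃ n, 1 ≤ n ∧ 0 < (P ^ n) x y)
    (π : X → ℝ) (hπstat : ∀ y, ∑ x, π x * P x y = π y)
    (hπpos : ∀ x, 0 < π x) (hπsum : ∑ x, π x = 1)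
    (o : X) (u w : X → ℂ)
    (hu : ∀ x, lap P (lap P u) x = lap P (lap P w) x) :
    ∀ x, w x = u x + (w o - u o) := by
  set d := fun x => w x - u x with hd
  have hlapd : lap P d = fun x => lap P w x - lap P u x := funext fun x => lap_sub P w u x
  have hlap2d : ∀ x, lap P (lap P d) x = 0 := by
    intro x
    rw [hlapd]
    rw [lap_sub P (lap P w) (lap P u) x, hu x, sub_self]
  have hconst : ∀ x, lap P d x = lap P d o :=
    harmonic_const P hnonneg hrow hirr o (lap P d) hlap2d
  have hsum := stat_lap P π hπstat d
  have hsum' : (∑ x, (π x : ℂ)) * lap P d o = 0 := by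
    rw [← hsum, Finset.sum_mul]
    apply Finset.sum_congr rfl
    intro x _
    rw [hconst x]
  have hπ1 : (∑ x, (π x : ℂ)) = 1 := by
    rw [← Complex.ofReal_sum, hπsum]; norm_num
  rw [hπ1, one_mul] at hsum'
  have hlapd0 : ∀ x, lap P d x = 0 := fun x => by rw [hconst x, hsum']
  have hdconst : ∀ x, d x = d o :=
    harmonic_const P hnonneg hrow hirr o d hlapd0
  intro x
  have := hdconst x
  simp only [hd] at this
  linear_combination this

end

theorem iterated_poisson_equation {X : Type*} [Fintype X] [DecidableEq X]
    (P : Matrix X X ℝ)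
    (hcard : 1 < Fintype.card X)
    (hnonneg : ∀ x y, 0 ≤ P x y)
    (hrow : ∀ x, ∑ y, P x y = 1)
    (hirr : ∀ x y, ∃ n, 1 ≤ n ∧ 0 < (P ^ n) x y)
    (π : X → ℝ)
    (hπstat : ∀ y, ∑ x, π x * P x y = π y)
    (hπpos : ∀ x, 0 < π x) (hπsum : ∑ x, π x = 1)
    (o : X) (f : X → ℂ) :
    ((∃ u : X → ℂ, ∀ x, lap P (lap P u) x = f x) ↔ ∑ x, (π x : ℂ) * f x = 0) ∧
    (∑ x, (π x : ℂ) * f x = 0 →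
      ∃ u : X → ℂ,
        (∀ x, lap P (lap P u) x = f x) ∧ u o = 0 ∧
        (∀ x, u x =
          mulVecC (greenExt P (Finset.univ.erase o))
            (fun z => mulVecC (greenExt P (Finset.univ.erase o)) f z -
              ∑ w ∈ Finset.univ.erase o,
                (π w : ℂ) * mulVecC (greenExt P (Finset.univ.erase o)) f w) x) ∧
        (∀ w : X → ℂ, ((∀ x, lap P (lap P w) x = f x) ∧ w o = 0) → w = u) ∧
        (∀ w : X → ℂ,
          (∀ x, lap P (lap P w) x = f x) ↔ ∃ c' : ℂ, w = fun x => u x + c')) := by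
  have hπ1 : (∑ x, (π x : ℂ)) = 1 := by
    rw [← Complex.ofReal_sum, hπsum]; norm_num
  -- main construction, given the balance condition
  have main : ∑ x, (π x : ℂ) * f x = 0 →
      ∃ u : X → ℂ,
        (∀ x, lap P (lap P u) x = f x) ∧ u o = 0 ∧
        (∀ x, u x =
          mulVecC (greenExt P (Finset.univ.erase o))
            (fun z => mulVecC (greenExt P (Finset.univ.erase o)) f z -
              ∑ w ∈ Finset.univ.erase o,
                (π w : ℂ) * mulVecC (greenExt P (Finset.univ.erase o)) f w) x) ∧
        (∀ w : X → ℂ, ((∀ x, lap P (lap P w) x = f x) ∧ w o = 0) → w = u) ∧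
        (∀ w : X → ℂ,
          (∀ x, lap P (lap P w) x = f x) ↔ ∃ c' : ℂ, w = fun x => u x + c') := by
    intro hf
    set v₀ : X → ℂ := mulVecC (greenExt P (Finset.univ.erase o)) f with hv₀
    set c : ℂ := ∑ w ∈ Finset.univ.erase o, (π w : ℂ) * v₀ w with hc
    set u : X → ℂ := mulVecC (greenExt P (Finset.univ.erase o)) (fun z => v₀ z - c) with hu
    have hv₀o : v₀ o = 0 := mulVecC_greenExt_o P o f
    have hv₀sum : ∑ x, (π x : ℂ) * v₀ x = c := by
      rw [← Finset.sum_erase_add Finset.univ (fun x => (π x : ℂ) * v₀ x) (Finset.mem_univ o),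
        hv₀o, mul_zero, add_zero, hc]
    have hgsum : ∑ x, (π x : ℂ) * (v₀ x - c) = 0 := by
      rw [Finset.sum_congr rfl (fun x _ => mul_sub (π x : ℂ) (v₀ x) c),
        Finset.sum_sub_distrib, ← Finset.sum_mul, hπ1, one_mul, hv₀sum, sub_self]
    have hlapu : ∀ x, lap P u x = -(v₀ x - c) :=
      lap_greenExt_all P hnonneg hrow hirr π hπstat hπpos o (fun z => v₀ z - c) hgsum
    have hlapv₀ : ∀ x, lap P v₀ x = -f x :=
      lap_greenExt_all P hnonneg hrow hirr π hπstat hπpos o f hf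
    have hlapufn : lap P u = fun x => c - v₀ x := funext fun x => by rw [hlapu x]; ring
    have hsol : ∀ x, lap P (lap P u) x = f x := by
      intro x
      rw [hlapufn, lap_const_sub P hrow c v₀ x, hlapv₀ x, neg_neg]
    have huo : u o = 0 := mulVecC_greenExt_o P o _
    refine ⟨u, hsol, huo, fun x => rfl, ?_, ?_⟩
    · intro w ⟨hw, hwo⟩
      have := bisolution P hnonneg hrow hirr π hπstat hπpos hπsum o u w
        (fun x => by rw [hsol x, hw x])
      funext x
      rw [this x, hwo, huo]
      ring
    · intro w
      constructor
      · intro hw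
        refine ⟨w o - u o, funext fun x => ?_⟩
        exact bisolution P hnonneg hrow hirr π hπstat hπpos hπsum o u w
          (fun x => by rw [hsol x, hw x]) x
      · rintro ⟨c', rfl⟩
        intro x
        have h1 : lap P (fun x => u x + c') = lap P u :=
          funext fun x => lap_add_const P hrow c' u x
        rw [h1, hsol x]
  constructor
  · constructor
    · rintro ⟨u, hu⟩
      have := stat_lap P π hπstat (lap P u)
      rw [← this]
      apply Finset.sum_congr rfl
      intro x _
      rw [hu x]
    · intro hf
      obtain ⟨u, hsol, -, -, -, -⟩ := main hf
      exact ⟨u, hsol⟩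
  · exact main
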